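/- Let A ⊆ ℝ^d be a nonempty finite set with mean μ = (1/|A|)∑_{x∈A} x, and let S ⊆ ℝ^d be a nonempty finite set of centers with φ_A(S) ≥ 64·φ_A({μ}). Define B = {x ∈ A : φ_{{μ}}(S)/3 ≤ φ_{{x}}(S) ≤ 7·φ_{{μ}}(S)/3}. Then |B| ≥ (25/31)·|A|. -/
import Mathlib


open Finset

open scoped Classical

/-- `phiPt x S` is the squared distance from `x` to its nearest center in `S`,
i.e. `min_{s ∈ S} ‖x - s‖²`. -/
noncomputable def phiPt {d : ℕ} (x : EuclideanSpace ℝ (Fin d))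
    (S : Finset (EuclideanSpace ℝ (Fin d))) : ℝ :=
  sInf ((fun s => ‖x - s‖ ^ 2) '' (S : Set (EuclideanSpace ℝ (Fin d))))

/-- `phi A S = ∑_{x ∈ A} min_{s ∈ S} ‖x - s‖²`, the `k`-means cost of centers `S` on `A`. -/
noncomputable def phi {d : ℕ} (A S : Finset (EuclideanSpace ℝ (Fin d))) : ℝ :=
  ∑ x ∈ A, phiPt x S

/-- The mean (centroid) of a finite set of points. -/
noncomputable def mean {d : ℕ} (A : Finset (EuclideanSpace ℝ (Fin d))) :
    EuclideanSpace ℝ (Fin d) :=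
  (A.card : ℝ)⁻¹ • ∑ x ∈ A, x

/-- `rho X S z` is the cost of the centers `S` on `X` after discarding the `z`
points of `X` farthest from `S`: the minimum of `phi Y S` over `Y ⊆ X` with
`|Y| = |X| - z`. -/
noncomputable def rho {d : ℕ} (X S : Finset (EuclideanSpace ℝ (Fin d))) (z : ℕ) : ℝ :=
  sInf ((fun Y : Finset (EuclideanSpace ℝ (Fin d)) => phi Y S) ''
    {Y : Finset (EuclideanSpace ℝ (Fin d)) | Y ⊆ X ∧ Y.card = X.card - z})

lemma phiPt_nonneg {d : ℕ} (x : EuclideanSpace ℝ (Fin d))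
    (S : Finset (EuclideanSpace ℝ (Fin d))) : 0 ≤ phiPt x S := by
  apply Real.sInf_nonneg
  rintro y ⟨s, _, rfl⟩
  positivity

lemma phiPt_le {d : ℕ} (x : EuclideanSpace ℝ (Fin d)) {s : EuclideanSpace ℝ (Fin d)}
    {S : Finset (EuclideanSpace ℝ (Fin d))} (hs : s ∈ S) :
    phiPt x S ≤ ‖x - s‖ ^ 2 := by
  apply csInf_le ((S.finite_toSet.image _).bddBelow)
  exact ⟨s, hs, rfl⟩

lemma phiPt_exists {d : ℕ} (x : EuclideanSpace ℝ (Fin d))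
    {S : Finset (EuclideanSpace ℝ (Fin d))} (hS : S.Nonempty) :
    ∃ s ∈ S, phiPt x S = ‖x - s‖ ^ 2 := by
  obtain ⟨s0, hs0⟩ := hS
  have hne : ((fun s => ‖x - s‖ ^ 2) '' (S : Set (EuclideanSpace ℝ (Fin d)))).Nonempty :=
    ⟨_, s0, hs0, rfl⟩
  obtain ⟨s, hs, h⟩ := hne.csInf_mem (S.finite_toSet.image _)
  exact ⟨s, hs, h.symm⟩

lemma sqrt_phiPt_le {d : ℕ} (x : EuclideanSpace ℝ (Fin d)) {s : EuclideanSpace ℝ (Fin d)}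
    {S : Finset (EuclideanSpace ℝ (Fin d))} (hs : s ∈ S) :
    Real.sqrt (phiPt x S) ≤ ‖x - s‖ := by
  rw [show ‖x - s‖ = Real.sqrt (‖x - s‖ ^ 2) by rw [Real.sqrt_sq (norm_nonneg _)]]
  exact Real.sqrt_le_sqrt (phiPt_le x hs)

lemma sqrt_lip {d : ℕ} (x y : EuclideanSpace ℝ (Fin d))
    {S : Finset (EuclideanSpace ℝ (Fin d))} (hS : S.Nonempty) :
    Real.sqrt (phiPt x S) ≤ ‖x - y‖ + Real.sqrt (phiPt y S) := by
  obtain ⟨s, hs, hr⟩ := phiPt_exists y hS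
  have h1 : Real.sqrt (phiPt x S) ≤ ‖x - s‖ := sqrt_phiPt_le x hs
  have h2 : ‖x - s‖ ≤ ‖x - y‖ + ‖y - s‖ := by
    have := dist_triangle x y s
    simpa [dist_eq_norm] using this
  have h3 : Real.sqrt (phiPt y S) = ‖y - s‖ := by rw [hr, Real.sqrt_sq (norm_nonneg _)]
  linarith

lemma key1 {m t c : ℝ} (hm : 0 ≤ m) (ht : 0 ≤ t) (hc : 0 ≤ c)
    (h : Real.sqrt m ≤ c + Real.sqrt t) (htm : t ≤ m / 3) : m / 6 ≤ c ^ 2 := by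
  have h1 : Real.sqrt t ≤ Real.sqrt (m / 3) := Real.sqrt_le_sqrt htm
  have h2 : Real.sqrt m - Real.sqrt (m / 3) ≤ c := by linarith
  have h3 : Real.sqrt (m / 3) ≤ Real.sqrt m := Real.sqrt_le_sqrt (by linarith)
  have h5 : (Real.sqrt m) ^ 2 = m := Real.sq_sqrt hm
  have h6 : (Real.sqrt (m / 3)) ^ 2 = m / 3 := Real.sq_sqrt (by linarith)
  have h7 : Real.sqrt m * Real.sqrt (m / 3) = Real.sqrt (m * (m / 3)) :=
    (Real.sqrt_mul hm _).symm
  have h8 : Real.sqrt (m * (m / 3)) ≤ 7 * m / 12 := by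
    calc Real.sqrt (m * (m / 3)) ≤ Real.sqrt ((7 * m / 12) ^ 2) :=
          Real.sqrt_le_sqrt (by nlinarith)
      _ = 7 * m / 12 := Real.sqrt_sq (by linarith)
  nlinarith [sq_nonneg (Real.sqrt m - Real.sqrt (m / 3))]

lemma key2 {m t c : ℝ} (hm : 0 ≤ m) (ht : 0 ≤ t) (hc : 0 ≤ c)
    (h : Real.sqrt t ≤ c + Real.sqrt m) (htm : 7 * m / 3 ≤ t) : m / 6 ≤ c ^ 2 := by
  have h1 : Real.sqrt (7 * m / 3) ≤ Real.sqrt t := Real.sqrt_le_sqrt htm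
  have h3 : Real.sqrt m ≤ Real.sqrt (7 * m / 3) := Real.sqrt_le_sqrt (by linarith)
  have h2 : Real.sqrt (7 * m / 3) - Real.sqrt m ≤ c := by linarith
  have h5 : (Real.sqrt m) ^ 2 = m := Real.sq_sqrt hm
  have h6 : (Real.sqrt (7 * m / 3)) ^ 2 = 7 * m / 3 := Real.sq_sqrt (by linarith)
  have h7 : Real.sqrt (7 * m / 3) * Real.sqrt m = Real.sqrt ((7 * m / 3) * m) :=
    (Real.sqrt_mul (by linarith) _).symm
  have h8 : Real.sqrt ((7 * m / 3) * m) ≤ 19 * m / 12 := by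
    calc Real.sqrt ((7 * m / 3) * m) ≤ Real.sqrt ((19 * m / 12) ^ 2) :=
          Real.sqrt_le_sqrt (by nlinarith)
      _ = 19 * m / 12 := Real.sqrt_sq (by linarith)
  nlinarith [sq_nonneg (Real.sqrt (7 * m / 3) - Real.sqrt m)]

/-- second property of Lemma 2. If `φ_A(S) ≥ 64·φ_A({μ})`, then the set
`B = {x ∈ A : φ_{{μ}}(S)/3 ≤ φ_{{x}}(S) ≤ 7·φ_{{μ}}(S)/3}` satisfies `|B| ≥ (25/31)·|A|`. -/
theorem stmt4 {d : ℕ} (A S : Finset (EuclideanSpace ℝ (Fin d)))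
    (hA : A.Nonempty) (hS : S.Nonempty)
    (h : phi A S ≥ 64 * phi A {mean A}) :
    ((A.filter (fun x => phiPt (mean A) S / 3 ≤ phiPt x S ∧
        phiPt x S ≤ 7 * phiPt (mean A) S / 3)).card : ℝ) ≥ (25 / 31) * A.card := by
  set μ := mean A with hμdef
  set m := phiPt μ S with hmdef
  have hm0 : 0 ≤ m := phiPt_nonneg μ S
  have hΔeq : phi A {μ} = ∑ x ∈ A, ‖x - μ‖ ^ 2 := by
    unfold phi
    refine Finset.sum_congr rfl fun x _ => ?_
    unfold phiPt
    simp
  set Δ := ∑ x ∈ A, ‖x - μ‖ ^ 2 with hΔdef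
  have hΔ0 : 0 ≤ Δ := Finset.sum_nonneg fun x _ => by positivity
  have hub : ∀ x ∈ A, phiPt x S ≤ 2 * ‖x - μ‖ ^ 2 + 2 * m := by
    intro x _
    have h1 := sqrt_lip x μ hS
    have h2 : (Real.sqrt (phiPt x S)) ^ 2 = phiPt x S := Real.sq_sqrt (phiPt_nonneg x S)
    have h3 : (Real.sqrt m) ^ 2 = m := Real.sq_sqrt hm0
    nlinarith [Real.sqrt_nonneg (phiPt x S), Real.sqrt_nonneg m, norm_nonneg (x - μ),
      sq_nonneg (‖x - μ‖ - Real.sqrt m)]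
  have hsum : phi A S ≤ 2 * Δ + 2 * A.card * m := by
    unfold phi
    calc ∑ x ∈ A, phiPt x S ≤ ∑ x ∈ A, (2 * ‖x - μ‖ ^ 2 + 2 * m) := Finset.sum_le_sum hub
      _ = 2 * Δ + 2 * A.card * m := by
          rw [Finset.sum_add_distrib, ← Finset.mul_sum, Finset.sum_const, nsmul_eq_mul]
          ring
  have hnm : 31 * Δ ≤ (A.card : ℝ) * m := by
    rw [hΔeq] at h
    linarith
  set P : EuclideanSpace ℝ (Fin d) → Prop :=
    fun x => phiPt μ S / 3 ≤ phiPt x S ∧ phiPt x S ≤ 7 * phiPt μ S / 3 with hPdef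
  have hcard : (A.filter P).card + (A.filter fun x => ¬ P x).card = A.card :=
    Finset.card_filter_add_card_filter_not _
  have hbad : ∀ x ∈ A.filter fun x => ¬ P x, m / 6 ≤ ‖x - μ‖ ^ 2 := by
    intro x hx
    rw [Finset.mem_filter] at hx
    obtain ⟨hxA, hnp⟩ := hx
    rw [hPdef, not_and_or] at hnp
    rcases hnp with h1 | h2
    · push_neg at h1
      have hl := sqrt_lip μ x hS
      rw [norm_sub_rev] at hl
      exact key1 hm0 (phiPt_nonneg x S) (norm_nonneg _) hl (le_of_lt h1)
    · push_neg at h2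
      exact key2 hm0 (phiPt_nonneg x S) (norm_nonneg _) (sqrt_lip x μ hS) (le_of_lt h2)
  have hΔbad : ((A.filter fun x => ¬ P x).card : ℝ) * (m / 6) ≤ Δ := by
    calc ((A.filter fun x => ¬ P x).card : ℝ) * (m / 6)
        = ∑ _x ∈ A.filter fun x => ¬ P x, m / 6 := by
          rw [Finset.sum_const, nsmul_eq_mul]
      _ ≤ ∑ x ∈ A.filter fun x => ¬ P x, ‖x - μ‖ ^ 2 := Finset.sum_le_sum hbad
      _ ≤ Δ := Finset.sum_le_sum_of_subset_of_nonneg (Finset.filter_subset _ _)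
          (fun x _ _ => by positivity)
  rcases eq_or_lt_of_le hm0 with hm' | hm'
  · -- m = 0
    have hΔz : Δ = 0 := by
      have : (A.card : ℝ) * m = 0 := by rw [← hm']; ring
      linarith
    have hall : A.filter P = A := by
      apply Finset.filter_true_of_mem
      intro x hxA
      have h0 : ‖x - μ‖ ^ 2 = 0 := by
        exact (Finset.sum_eq_zero_iff_of_nonneg
          (fun y _ => by positivity)).mp hΔz x hxA
      constructor
      · rw [← hmdef, ← hm']
        simpa using phiPt_nonneg x S
      · have := hub x hxA
        rw [← hmdef, ← hm']
        rw [h0, ← hm'] at this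
        linarith
    rw [hall]
    have : (0:ℝ) ≤ (A.card : ℝ) := Nat.cast_nonneg _
    linarith
  · -- m > 0
    have h6 : ((A.filter fun x => ¬ P x).card : ℝ) ≤ 6 * A.card / 31 := by
      have h1 : ((A.filter fun x => ¬ P x).card : ℝ) * m ≤ 6 * Δ := by linarith
      nlinarith
    have hc : ((A.filter P).card : ℝ) = (A.card : ℝ) - ((A.filter fun x => ¬ P x).card : ℝ) := by
      have := hcard
      push_cast [← this]
      ring
    rw [hc]
    linarith
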